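/- For positive integers x, y, z, w with w - z ≥ x, the combinatorial identity ∑_{j=x}^{w-z} C(j,y)·C(w-j,z) = ∑_{i=0}^{y} C(x,i)·C(w-x+1, z+y-i+1) holds for ordinary binomial coefficients. -/

import Mathlib

open SimpleGraph Finset Nat

/-- A set of edges forms a connected (sub)graph: the graph it spans,
induced on its support, is connected. -/
def EdgeSetConnected (V : Type*) (S : Set (Sym2 V)) : Prop :=
  ((SimpleGraph.fromEdgeSet S).induce (SimpleGraph.fromEdgeSet S).support).Connected

/-- A shelling of a graph `G`: an ordering of its edges such that every
initial segment forms a connected subgraph. -/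
def IsShelling {V : Type*} (G : SimpleGraph V)
    (σ : Fin (Nat.card G.edgeSet) ≃ G.edgeSet) : Prop :=
  ∀ k : Fin (Nat.card G.edgeSet),
    EdgeSetConnected V {e | ∃ i, i ≤ k ∧ (σ i : Sym2 V) = e}

/-- The number of shellings of `G`. -/
noncomputable def shellingCount {V : Type*} (G : SimpleGraph V) : ℕ :=
  Nat.card {σ : Fin (Nat.card G.edgeSet) ≃ G.edgeSet // IsShelling G σ}

/-- The number of shellings of `G` rooted at `v`, i.e. whose first edge is incident to `v`. -/
noncomputable def rootedShellingCount {V : Type*} (G : SimpleGraph V) (v : V) : ℕ :=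
  Nat.card {σ : Fin (Nat.card G.edgeSet) ≃ G.edgeSet //
    IsShelling G σ ∧ ∃ h : 0 < Nat.card G.edgeSet, v ∈ (σ ⟨0, h⟩ : Sym2 V)}

/-- The number of vertices of the subtree rooted at `u` when the tree `G` is
rooted at `v`: vertices `w` such that `u` lies on the (unique) path from `v` to `w`. -/
noncomputable def subtreeSize {V : Type*} (G : SimpleGraph V) (v u : V) : ℕ :=
  Nat.card {w : V | ∀ p : G.Path v w, u ∈ (p : G.Walk v w).support}

lemma choose_step (x y z M : ℕ) :
    ∑ i ∈ Finset.range (y+1), x.choose (y-i) * (M+1).choose (z+i+1)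
    = x.choose y * M.choose z
      + ∑ i ∈ Finset.range (y+1), (x+1).choose (y-i) * M.choose (z+i+1) := by
  have h1 : ∑ i ∈ Finset.range (y+1), x.choose (y-i) * (M+1).choose (z+i+1)
      = (∑ i ∈ Finset.range (y+1), x.choose (y-i) * M.choose (z+i))
        + ∑ i ∈ Finset.range (y+1), x.choose (y-i) * M.choose (z+i+1) := by
    rw [← Finset.sum_add_distrib]
    refine Finset.sum_congr rfl fun i _ => ?_
    rw [show z+i+1 = (z+i)+1 from rfl, Nat.choose_succ_succ, Nat.mul_add]
  have h2 : ∑ i ∈ Finset.range (y+1), x.choose (y-i) * M.choose (z+i)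
      = x.choose y * M.choose z
        + ∑ i ∈ Finset.range y, x.choose (y-(i+1)) * M.choose (z+i+1) := by
    rw [Finset.sum_range_succ']
    simp [add_comm, add_assoc, add_left_comm]
  have h3 : ∑ i ∈ Finset.range (y+1), (x+1).choose (y-i) * M.choose (z+i+1)
      = (∑ i ∈ Finset.range y, x.choose (y-(i+1)) * M.choose (z+i+1))
        + ∑ i ∈ Finset.range (y+1), x.choose (y-i) * M.choose (z+i+1) := by
    rw [Finset.sum_range_succ (fun i => (x+1).choose (y-i) * M.choose (z+i+1)),
      Finset.sum_range_succ (fun i => x.choose (y-i) * M.choose (z+i+1))]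
    have hterm : ∀ i ∈ Finset.range y, (x+1).choose (y-i) * M.choose (z+i+1)
        = x.choose (y-(i+1)) * M.choose (z+i+1) + x.choose (y-i) * M.choose (z+i+1) := by
      intro i hi
      rw [Finset.mem_range] at hi
      have hyi : y - i = (y-(i+1)) + 1 := by omega
      rw [hyi, Nat.choose_succ_succ, add_mul]
    rw [Finset.sum_congr rfl hterm, Finset.sum_add_distrib]
    simp
    ring
  rw [h1, h2, h3]
  ring

lemma choose_aux (y z : ℕ) : ∀ (d x : ℕ),
    ∑ t ∈ Finset.range (d+1), (x+t).choose y * (z+(d-t)).choose z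
    = ∑ i ∈ Finset.range (y+1), x.choose (y-i) * (z+d+1).choose (z+i+1) := by
  intro d
  induction d with
  | zero =>
    intro x
    rw [Finset.sum_range_succ' (fun i => x.choose (y-i) * (z+0+1).choose (z+i+1))]
    have : ∀ i ∈ Finset.range y, x.choose (y-(i+1)) * (z+0+1).choose (z+(i+1)+1) = 0 := by
      intro i _
      rw [Nat.choose_eq_zero_of_lt (show z+0+1 < z+(i+1)+1 by omega), mul_zero]
    rw [Finset.sum_congr rfl this]
    simp
  | succ d ih =>
    intro x
    rw [Finset.sum_range_succ' (fun t => (x+t).choose y * (z+(d+1-t)).choose z)]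
    have : ∀ t ∈ Finset.range (d+1), (x+(t+1)).choose y * (z+(d+1-(t+1))).choose z
        = ((x+1)+t).choose y * (z+(d-t)).choose z := by
      intro t _
      congr 2
      · omega
      · omega
    rw [Finset.sum_congr rfl this, ih (x+1)]
    simp only [Nat.sub_zero, Nat.add_zero]
    rw [show z + (d+1) = z + d + 1 from rfl]
    have := choose_step x y z (z+d+1)
    omega

/-- For positive integers `x, y, z, w` with `w - z ≥ x`, we have
`∑_{j=x}^{w-z} C(j,y) C(w-j,z) = ∑_{i=0}^{y} C(x,i) C(w-x+1, z+y-i+1)`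
for ordinary binomial coefficients. -/
theorem choose_sum_identity (x y z w : ℕ) (hx : 0 < x) (hy : 0 < y) (hz : 0 < z)
    (hw : 0 < w) (h : x ≤ w - z) :
    ∑ j ∈ Finset.Icc x (w - z), j.choose y * (w - j).choose z =
      ∑ i ∈ Finset.range (y + 1), x.choose i * (w - x + 1).choose (z + y - i + 1) := by
  have hzw : z ≤ w := by omega
  set d := w - z - x with hd
  have hw' : w = z + x + d := by omega
  rw [← Finset.Ico_add_one_right_eq_Icc, Finset.sum_Ico_eq_sum_range]
  have h1 : ∀ t ∈ Finset.range (d+1), (x+t).choose y * (w-(x+t)).choose z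
      = (x+t).choose y * (z+(d-t)).choose z := by
    intro t ht
    rw [Finset.mem_range] at ht
    congr 2
    omega
  have hrange : w - z + 1 - x = d + 1 := by omega
  rw [hrange, Finset.sum_congr rfl h1, choose_aux y z d x]
  rw [← Finset.sum_range_reflect (fun i => x.choose i * (w - x + 1).choose (z + y - i + 1)) (y+1)]
  refine Finset.sum_congr rfl fun i hi => ?_
  rw [Finset.mem_range] at hi
  congr 2
  · omega
  · omega
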